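/- Let k ≥ 1 be an integer, d = 2k+1, and α, β ∈ ℂ \ {0}. With P = α·y^d, Q = β·x^k·y·z^k − β²·z^d, R = x^(d−1)·y − β·x^k·z^(k+1), consider the coefficients A = yR − zQ, B = zP − xR, C = xQ − yP of the projective 1-form associated to the vector field X = P ∂/∂x + Q ∂/∂y + R ∂/∂z. Then any polynomial in ℂ[x,y,z] dividing A, B and C simultaneously is a nonzero constant; consequently the foliation defined by X has degree exactly d. -/

import Mathlib

open MvPolynomial

/-- Units of `MvPolynomial (Fin n) ℂ` are constants. -/
lemma stmt16_aux_isUnit_eq_C : ∀ (n : ℕ) (D : MvPolynomial (Fin n) ℂ), IsUnit D →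
    ∃ c : ℂ, D = MvPolynomial.C c := by
  intro n
  induction n with
  | zero => intro D _; exact ⟨D.coeff 0, eq_C_of_isEmpty D⟩
  | succ n ih =>
    intro D hD
    have h1 : IsUnit (finSuccEquiv ℂ n D) := hD.map (finSuccEquiv ℂ n)
    have hdeg := Polynomial.degree_eq_zero_of_isUnit h1
    have h2 := Polynomial.eq_C_of_degree_le_zero hdeg.le
    have h3 : IsUnit ((finSuccEquiv ℂ n D).coeff 0) := by
      rw [h2] at h1; exact Polynomial.isUnit_C.mp h1
    obtain ⟨c, hc⟩ := ih _ h3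
    refine ⟨c, (finSuccEquiv ℂ n).injective ?_⟩
    rw [h2, hc]
    simp [finSuccEquiv_apply]

/-- For `d = 2k+1`, `α, β ≠ 0`, the coefficients `A = yR − zQ`, `B = zP − xR`,
`C = xQ − yP` of the projective 1-form associated to the vector field
`X = α y^d ∂x + (β x^k y z^k − β² z^d) ∂y + (x^(d−1) y − β x^k z^(k+1)) ∂z`
have no common non-constant factor: any common divisor is a nonzero constant.
Consequently the foliation defined by `X` has degree exactly `d`. -/
theorem stmt_16 (k d : ℕ) (hk : 1 ≤ k) (hd : d = 2 * k + 1)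
    (α β : ℂ) (hα : α ≠ 0) (hβ : β ≠ 0)
    (P Q R A B C' : MvPolynomial (Fin 3) ℂ)
    (hP : P = C α * X 1 ^ d)
    (hQ : Q = C β * X 0 ^ k * X 1 * X 2 ^ k - C (β ^ 2) * X 2 ^ d)
    (hR : R = X 0 ^ (d - 1) * X 1 - C β * X 0 ^ k * X 2 ^ (k + 1))
    (hA : A = X 1 * R - X 2 * Q)
    (hB : B = X 2 * P - X 0 * R)
    (hC : C' = X 0 * Q - X 1 * P) :
    ∀ D : MvPolynomial (Fin 3) ℂ, D ∣ A → D ∣ B → D ∣ C' →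
      ∃ c : ℂ, c ≠ 0 ∧ D = MvPolynomial.C c := by
  subst hd hP hQ hR hA hB hC
  intro D h1 _ h3
  have hsub : (2 * k + 1 - 1 : ℕ) = 2 * k := by omega
  rw [hsub] at h1
  -- key identity: C (α^2) * X1 ^ (2*(2k+1)+2) is a combination of A and C'
  have key : D ∣ C (α ^ 2) * X 1 ^ (2 * (2 * k + 1) + 2) := by
    have hdvd : D ∣ C (β ^ 2) * X 0 ^ 2 * X 2 ^ (2 * k) *
        (X 1 * (X 0 ^ (2 * k) * X 1 - C β * X 0 ^ k * X 2 ^ (k + 1)) -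
          X 2 * (C β * X 0 ^ k * X 1 * X 2 ^ k - C (β ^ 2) * X 2 ^ (2 * k + 1))) -
        (X 0 * (C β * X 0 ^ k * X 1 * X 2 ^ k - C (β ^ 2) * X 2 ^ (2 * k + 1)) -
          X 1 * (C α * X 1 ^ (2 * k + 1))) *
        ((X 0 * (C β * X 0 ^ k * X 1 * X 2 ^ k - C (β ^ 2) * X 2 ^ (2 * k + 1)) -
          X 1 * (C α * X 1 ^ (2 * k + 1))) + 2 * C α * X 1 ^ (2 * k + 1 + 1)) :=
      dvd_sub (h1.mul_left _) (h3.mul_right _)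
    convert hdvd using 1
    simp only [C_pow]
    ring
  have hX1N : D ∣ (X 1 : MvPolynomial (Fin 3) ℂ) ^ (2 * (2 * k + 1) + 2) := by
    have h2 : (X 1 : MvPolynomial (Fin 3) ℂ) ^ (2 * (2 * k + 1) + 2) =
        C (α ^ 2)⁻¹ * (C (α ^ 2) * X 1 ^ (2 * (2 * k + 1) + 2)) := by
      rw [← mul_assoc, ← C_mul, inv_mul_cancel₀ (pow_ne_zero _ hα), C_1, one_mul]
    rw [h2]
    exact key.mul_left _
  have hprime : Prime (X 1 : MvPolynomial (Fin 3) ℂ) := by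
    let e := (renameEquiv ℂ (Equiv.swap (0:Fin 3) 1)).trans (finSuccEquiv ℂ 2)
    rw [← MulEquiv.prime_iff e.toMulEquiv]
    have : e.toMulEquiv (X 1) = Polynomial.X := by
      show e (X 1) = Polynomial.X
      simp [e, finSuccEquiv_X_zero]
    rw [this]
    exact Polynomial.prime_X
  obtain ⟨i, _, hassoc⟩ := (dvd_prime_pow hprime _).mp hX1N
  rcases Nat.eq_zero_or_pos i with h0 | hpos
  · subst h0
    rw [pow_zero] at hassoc
    have hD : IsUnit D := associated_one_iff_isUnit.mp hassoc
    obtain ⟨c, hc⟩ := stmt16_aux_isUnit_eq_C 3 D hD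
    refine ⟨c, ?_, hc⟩
    rintro rfl
    rw [map_zero] at hc
    exact hD.ne_zero hc
  · exfalso
    have hx1D : (X 1 : MvPolynomial (Fin 3) ℂ) ∣ D :=
      (dvd_pow_self (X 1 : MvPolynomial (Fin 3) ℂ) hpos.ne').trans hassoc.symm.dvd
    have hx1A := hx1D.trans h1
    have heval := (MvPolynomial.eval (![0, 0, 1] : Fin 3 → ℂ)).map_dvd hx1A
    simp [zero_pow (by omega : k ≠ 0)] at heval
    exact hβ (by simpa [pow_eq_zero_iff] using heval)
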